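/- For all positive integers k, the k-th Bernoulli number satisfies 2(1-2^k)B_k = (-1)^k * k * ∑_{m=1}^{k} (-1)^m * (m-1)! / 2^{m-1} * S(k,m). -/

import Mathlib

open Finset PowerSeries


/-- Stirling numbers of the second kind. -/
def stirling2 : ℕ → ℕ → ℕ
  | 0, 0 => 1
  | 0, _ + 1 => 0
  | _ + 1, 0 => 0
  | n + 1, k + 1 => (k + 1) * stirling2 n (k + 1) + stirling2 n k

lemma stirling2_zero_zero : stirling2 0 0 = 1 := rfl
lemma stirling2_zero_succ (m : ℕ) : stirling2 0 (m + 1) = 0 := rfl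
lemma stirling2_succ_zero (n : ℕ) : stirling2 (n + 1) 0 = 0 := rfl
lemma stirling2_succ (n k : ℕ) :
    stirling2 (n + 1) (k + 1) = (k + 1) * stirling2 n (k + 1) + stirling2 n k := rfl

lemma stirling2_eq_zero_of_lt : ∀ {n m : ℕ}, n < m → stirling2 n m = 0 := by
  intro n
  induction n with
  | zero => intro m h; cases m with
    | zero => omega
    | succ m => rfl
  | succ n ih =>
    intro m h
    cases m with
    | zero => omega
    | succ m =>
      rw [stirling2_succ, ih (by omega), ih (by omega)]
      ring

/-- Classical identity: S(n+1, m+1) = ∑_{i≤n} C(n,i) S(i,m). -/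
lemma stirling2_succ_succ_eq_sum (n : ℕ) : ∀ m : ℕ,
    stirling2 (n + 1) (m + 1) = ∑ i ∈ range (n + 1), n.choose i * stirling2 i m := by
  induction n with
  | zero =>
    intro m
    simp [stirling2_succ, stirling2_zero_succ]
  | succ n ih =>
    intro m
    have step : ∑ i ∈ range (n + 2), (n+1).choose i * stirling2 i m
        = (∑ i ∈ range (n + 2), n.choose i * stirling2 i m)
          + ∑ j ∈ range (n + 1), n.choose j * stirling2 (j+1) m := by
      rw [Finset.sum_range_succ' (fun i => (n+1).choose i * stirling2 i m),
        Finset.sum_range_succ' (fun i => n.choose i * stirling2 i m)]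
      simp only [Nat.choose_succ_succ, Nat.add_mul, Finset.sum_add_distrib,
        Nat.choose_zero_right, Nat.succ_eq_add_one]
      ring
    have h1 : ∑ i ∈ range (n + 2), n.choose i * stirling2 i m
        = stirling2 (n+1) (m+1) := by
      rw [Finset.sum_range_succ, Nat.choose_succ_self, zero_mul, add_zero, ih m]
    rw [step, h1]
    cases m with
    | zero =>
      simp only [stirling2_succ_zero, Nat.mul_zero, Finset.sum_const_zero, add_zero]
      rw [stirling2_succ]
      simp [stirling2_succ_zero]
    | succ m =>
      have h2 : ∑ j ∈ range (n + 1), n.choose j * stirling2 (j+1) (m+1)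
          = (m+1) * stirling2 (n+1) (m+2) + stirling2 (n+1) (m+1) := by
        have : ∀ j ∈ range (n+1), n.choose j * stirling2 (j+1) (m+1)
            = (m+1) * (n.choose j * stirling2 j (m+1)) + n.choose j * stirling2 j m := by
          intro j _
          rw [stirling2_succ]
          ring
        rw [Finset.sum_congr rfl this, Finset.sum_add_distrib, ← Finset.mul_sum,
          ← ih m, ← ih (m+1)]
      rw [h2, stirling2_succ (n+1) (m+1)]
      ring

/-- `u n = ∑_{m=0}^n (-1)^m m!/2^m S(n,m)`, EGF `2/(eˣ+1)`. -/
noncomputable def uu (n : ℕ) : ℚ :=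
  ∑ m ∈ range (n + 1), (-1) ^ m * (m.factorial : ℚ) / 2 ^ m * stirling2 n m

lemma uu_zero : uu 0 = 1 := by simp [uu, stirling2_zero_zero]

/-- Core recurrence consequence: `∑_j (-1)^j j!/2^j S(n+1, j+1) = -u n + 2δ_{n,0}`. -/
lemma key_range (n : ℕ) :
    ∑ j ∈ range (n + 1), (-1) ^ j * (j.factorial : ℚ) / 2 ^ j * stirling2 (n+1) (j+1)
      = -uu n + (if n = 0 then 2 else 0) := by
  have expand : ∀ j ∈ range (n + 1),
      (-1) ^ j * (j.factorial : ℚ) / 2 ^ j * stirling2 (n+1) (j+1)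
      = (-2) * ((-1) ^ (j+1) * ((j+1).factorial : ℚ) / 2 ^ (j+1) * stirling2 n (j+1))
        + (-1) ^ j * (j.factorial : ℚ) / 2 ^ j * stirling2 n j := by
    intro j _
    rw [stirling2_succ]
    push_cast [Nat.factorial_succ]
    ring
  rw [Finset.sum_congr rfl expand, Finset.sum_add_distrib, ← Finset.mul_sum]
  have shift : ∑ j ∈ range (n + 1),
      ((-1) ^ (j+1) * ((j+1).factorial : ℚ) / 2 ^ (j+1) * stirling2 n (j+1))
      = uu n - stirling2 n 0 := by
    have := Finset.sum_range_succ' (fun m => (-1) ^ m * (m.factorial : ℚ) / 2 ^ m * stirling2 n m) (n+1)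
    rw [Finset.sum_range_succ] at this
    rw [stirling2_eq_zero_of_lt (Nat.lt_succ_self n)] at this
    norm_num at this
    rw [eq_sub_iff_add_eq, ← this, uu]
  rw [shift]
  have last : (fun m => (-1) ^ m * (m.factorial : ℚ) / 2 ^ m * stirling2 n m) n
      + ∑ j ∈ range n, (-1) ^ j * (j.factorial : ℚ) / 2 ^ j * stirling2 n j = uu n := by
    rw [uu, Finset.sum_range_succ]; ring
  have sumid : ∑ j ∈ range (n + 1), (-1) ^ j * (j.factorial : ℚ) / 2 ^ j * stirling2 n j
      = uu n := by rw [uu]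
  rw [sumid]
  cases n with
  | zero => norm_num [stirling2_zero_zero, uu_zero]
  | succ n => simp [stirling2_succ_zero]; ring

/-- The Icc sum in the theorem equals `u (k-1) - 2δ_{k,1}`. -/
lemma icc_sum_eq (n : ℕ) :
    ∑ m ∈ Finset.Icc 1 (n+1), (-1) ^ m * ((m - 1).factorial : ℚ) / 2 ^ (m - 1) * stirling2 (n+1) m
      = uu n - (if n = 0 then 2 else 0) := by
  have : ∑ m ∈ Finset.Icc 1 (n+1), (-1) ^ m * ((m - 1).factorial : ℚ) / 2 ^ (m - 1) * stirling2 (n+1) m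
      = ∑ j ∈ range (n + 1), (-1) ^ (j+1) * (j.factorial : ℚ) / 2 ^ j * stirling2 (n+1) (j+1) := by
    rw [← Finset.Ico_add_one_right_eq_Icc, Finset.sum_Ico_eq_sum_range]
    simp only [show n + 1 + 1 - 1 = n + 1 from rfl]
    apply Finset.sum_congr rfl
    intro j _
    rw [add_comm 1 j]
    congr 1 <;> simp
  rw [this]
  have : ∑ j ∈ range (n + 1), (-1) ^ (j+1) * (j.factorial : ℚ) / 2 ^ j * stirling2 (n+1) (j+1)
      = -∑ j ∈ range (n + 1), (-1) ^ j * (j.factorial : ℚ) / 2 ^ j * stirling2 (n+1) (j+1) := by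
    rw [← Finset.sum_neg_distrib]
    apply Finset.sum_congr rfl
    intro j _
    ring
  rw [this, key_range]
  ring

/-- Binomial transform of `u`: `∑_i C(n,i) u i = -u n + 2δ_{n,0}`. -/
lemma sum_choose_uu (n : ℕ) :
    ∑ i ∈ range (n + 1), (n.choose i : ℚ) * uu i = -uu n + (if n = 0 then 2 else 0) := by
  have expand : ∀ i ∈ range (n+1), (n.choose i : ℚ) * uu i
      = ∑ m ∈ range (n+1), (-1) ^ m * (m.factorial : ℚ) / 2 ^ m * (n.choose i * stirling2 i m) := by
    intro i hi
    simp only [Finset.mem_range] at hi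
    have hsub : range (i+1) ⊆ range (n+1) := Finset.range_subset_range.2 (by omega)
    rw [uu, Finset.mul_sum, Finset.sum_subset hsub]
    · apply Finset.sum_congr rfl; intro m _; push_cast; ring
    · intro m _ hm
      simp only [Finset.mem_range, not_lt] at hm
      rw [stirling2_eq_zero_of_lt (by omega)]
      simp
  rw [Finset.sum_congr rfl expand, Finset.sum_comm]
  have inner : ∀ m ∈ range (n+1),
      ∑ i ∈ range (n+1), (-1) ^ m * (m.factorial : ℚ) / 2 ^ m * (n.choose i * stirling2 i m)
      = (-1) ^ m * (m.factorial : ℚ) / 2 ^ m * stirling2 (n+1) (m+1) := by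
    intro m _
    rw [← Finset.mul_sum]
    congr 1
    rw [stirling2_succ_succ_eq_sum]
    push_cast
    ring
  rw [Finset.sum_congr rfl inner, key_range]

noncomputable def UU : PowerSeries ℚ := PowerSeries.mk fun n => uu n / n.factorial

lemma two_eq_C : (2 : PowerSeries ℚ) = PowerSeries.C (2 : ℚ) := by
  rw [map_ofNat]

lemma UU_mul_exp_add_one : UU * (exp ℚ + 1) = 2 := by
  ext n
  rw [two_eq_C, coeff_C, coeff_mul, Finset.Nat.sum_antidiagonal_eq_sum_range_succ_mk]
  have hterm : ∀ i ∈ range (n+1),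
      (coeff i) UU * (coeff (n - i)) (exp ℚ + 1)
      = (n.choose i : ℚ) * uu i / n.factorial
        + (if i = n then uu n / n.factorial else 0) := by
    intro i hi
    simp only [Finset.mem_range] at hi
    rw [map_add, UU, coeff_mk, coeff_exp, PowerSeries.coeff_one]
    simp only [Algebra.algebraMap_self, RingHom.id_apply]
    rcases eq_or_ne i n with rfl | hne
    · simp only [Nat.sub_self, if_pos rfl, if_true]
      rw [Nat.choose_self]
      field_simp [Nat.factorial_ne_zero]
      ring
    · have h1 : n - i ≠ 0 := by omega
      rw [if_neg h1, if_neg hne, add_zero, add_zero]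
      rw [Nat.cast_choose ℚ (by omega : i ≤ n)]
      have f1 : (i.factorial : ℚ) ≠ 0 := Nat.cast_ne_zero.2 (Nat.factorial_ne_zero i)
      have f2 : ((n-i).factorial : ℚ) ≠ 0 := Nat.cast_ne_zero.2 (Nat.factorial_ne_zero _)
      have f3 : (n.factorial : ℚ) ≠ 0 := Nat.cast_ne_zero.2 (Nat.factorial_ne_zero n)
      field_simp
  rw [Finset.sum_congr rfl hterm, Finset.sum_add_distrib, Finset.sum_ite_eq' (range (n+1)) n]
  rw [if_pos (Finset.self_mem_range_succ n)]
  have : ∑ i ∈ range (n+1), (n.choose i : ℚ) * uu i / n.factorial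
      = (-uu n + (if n = 0 then 2 else 0)) / n.factorial := by
    rw [← sum_choose_uu n, ← Finset.sum_div]
  rw [this]
  rcases eq_or_ne n 0 with rfl | hn
  · norm_num
  · rw [if_neg hn]
    have f3 : (n.factorial : ℚ) ≠ 0 := Nat.cast_ne_zero.2 (Nat.factorial_ne_zero n)
    field_simp
    ring

lemma exp_sub_one_ne_zero : (exp ℚ - 1) ≠ 0 := by
  intro h
  have := congrArg (coeff 1) h
  simp [coeff_exp] at this

lemma exp_add_one_ne_zero : (exp ℚ + 1) ≠ 0 := by
  intro h
  have := congrArg constantCoeff h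
  simp [constantCoeff_exp] at this

lemma genocchi_eq (n : ℕ) :
    2 * (1 - 2 ^ (n+1)) * bernoulli (n+1) = (n + 1 : ℚ) * uu n := by
  set B := bernoulliPowerSeries ℚ with hBdef
  have hB : B * (exp ℚ - 1) = X := bernoulliPowerSeries_mul_exp_sub_one ℚ
  have hexp2 : exp ℚ ^ 2 = rescale (2 : ℚ) (exp ℚ) := by
    have := exp_pow_eq_rescale_exp (A := ℚ) 2
    simpa using this
  have h2 : rescale (2 : ℚ) B * (exp ℚ ^ 2 - 1) = 2 * X := by
    rw [hexp2, show (1 : PowerSeries ℚ) = rescale (2:ℚ) 1 by rw [map_one],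
      ← map_sub, ← map_mul, hB, rescale_X, two_eq_C]
  have hG : (2 * B - 2 * rescale (2:ℚ) B) * (exp ℚ + 1) = 2 * X := by
    apply mul_right_cancel₀ exp_sub_one_ne_zero
    linear_combination 2 * (exp ℚ + 1) * hB - 2 * h2
  have hXU : (X * UU) * (exp ℚ + 1) = 2 * X := by
    rw [mul_assoc, UU_mul_exp_add_one]; ring
  have hEq : 2 * B - 2 * rescale (2:ℚ) B = X * UU :=
    mul_right_cancel₀ exp_add_one_ne_zero (hG.trans hXU.symm)
  have hc := congrArg (coeff (n+1)) hEq
  rw [coeff_succ_X_mul, two_eq_C, map_sub, coeff_C_mul, coeff_C_mul, coeff_rescale] at hc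
  simp only [UU, coeff_mk, hBdef, bernoulliPowerSeries, Algebra.algebraMap_self,
    RingHom.id_apply] at hc
  have f2 : (n.factorial : ℚ) ≠ 0 := Nat.cast_ne_zero.2 (Nat.factorial_ne_zero _)
  have hn1 : ((n : ℚ) + 1) ≠ 0 := by positivity
  have hfac : ((n+1).factorial : ℚ) = ((n : ℚ) + 1) * n.factorial := by
    rw [Nat.factorial_succ]; push_cast; ring
  rw [hfac] at hc
  field_simp at hc
  have := mul_right_cancel₀ f2 (by linear_combination (n.factorial : ℚ) * hc :
    (2 * (1 - 2 ^ (n+1)) * bernoulli (n + 1)) * (n.factorial : ℚ)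
      = (((n : ℚ) + 1) * uu n) * n.factorial)
  exact this

lemma uu_even_eq_zero (n : ℕ) (hne : n ≠ 0) (he : Even n) : uu n = 0 := by
  have hU := UU_mul_exp_add_one
  have hV : evalNegHom UU * (evalNegHom (exp ℚ) + 1) = 2 := by
    have := congrArg evalNegHom hU
    rw [map_mul, map_add, map_one, map_ofNat] at this
    exact this
  have h1 : exp ℚ * evalNegHom (exp ℚ) = 1 := exp_mul_exp_neg_eq_one
  have hV2 : evalNegHom UU * (exp ℚ + 1) = 2 * exp ℚ := by
    apply mul_right_cancel₀ exp_add_one_ne_zero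
    linear_combination (exp ℚ + 1) * exp ℚ * hV - (evalNegHom UU) * (exp ℚ + 1) * h1
  have hsum : (UU + evalNegHom UU) * (exp ℚ + 1) = 2 * (exp ℚ + 1) := by
    linear_combination hU + hV2
  have hfin : UU + evalNegHom UU = 2 := mul_right_cancel₀ exp_add_one_ne_zero hsum
  have hc := congrArg (coeff n) hfin
  rw [map_add, two_eq_C, coeff_C, if_neg hne] at hc
  have hneg : (coeff n) (evalNegHom UU) = (-1) ^ n * (coeff n) UU := by
    rw [evalNegHom, coeff_rescale]
  rw [hneg, he.neg_one_pow, one_mul, UU, coeff_mk] at hc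
  have f2 : (n.factorial : ℚ) ≠ 0 := Nat.cast_ne_zero.2 (Nat.factorial_ne_zero _)
  field_simp at hc
  linarith [hc]

/-- 2(1-2^k) B_k = (-1)^k k * sum_{m=1}^k (-1)^m (m-1)!/2^(m-1) S(k,m). -/
theorem two_mul_one_sub_two_pow_mul_bernoulli (k : ℕ) (hk : 1 ≤ k) :
    2 * (1 - 2 ^ k) * bernoulli k = (-1) ^ k * k * ∑ m ∈ Finset.Icc 1 k,
      (-1) ^ m * ((m - 1).factorial : ℚ) / 2 ^ (m - 1) * stirling2 k m := by
  obtain ⟨n, rfl⟩ : ∃ n, k = n + 1 := ⟨k - 1, by omega⟩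
  rw [icc_sum_eq n, genocchi_eq n]
  rcases eq_or_ne n 0 with rfl | hn
  · norm_num [uu_zero]
  rcases Nat.even_or_odd n with he | ho
  · rw [uu_even_eq_zero n hn he, if_neg hn]
    push_cast
    ring
  · rw [if_neg hn, sub_zero, Even.neg_one_pow (Odd.add_one ho)]
    push_cast
    ring
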